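/- Let X have i.i.d. N(0,1) entries of size n×p with p ≤ n^A for a constant A. Then with probability at least 1 − C/p, the empirical coherence τ_n = max_{ℓ≠m} |(1/n)∑ᵢ X̃_{iℓ}X̃_{im}| of the normalized columns X̃_ℓ = X_ℓ/σ_ℓ (σ_ℓ² = (1/n)∑ᵢX²_{iℓ}) satisfies τ_n ≤ C'√(log p / n) for constants C, C' depending on A. -/

import Mathlib

open MeasureTheory ProbabilityTheory Finset Real
open scoped ENNReal NNReal
namespace Coh

lemma gauss_withDensity :
    gaussianReal 0 1 = volume.withDensity
      (fun x => ((Real.toNNReal (gaussianPDFReal 0 1 x) : ℝ≥0) : ℝ≥0∞)) := by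
  rw [gaussianReal_of_var_ne_zero _ one_ne_zero]; rfl

lemma integral_gaussianReal (g : ℝ → ℝ) :
    ∫ x, g x ∂(gaussianReal 0 1) = ∫ x, gaussianPDFReal 0 1 x * g x := by
  rw [gauss_withDensity, integral_withDensity_eq_integral_smul
    ((measurable_gaussianPDFReal 0 1).real_toNNReal) g]
  congr 1; funext x
  rw [NNReal.smul_def, Real.coe_toNNReal _ (gaussianPDFReal_nonneg 0 1 x), smul_eq_mul]

lemma integrable_gaussianReal_iff (g : ℝ → ℝ) :
    Integrable g (gaussianReal 0 1) ↔ Integrable (fun x => gaussianPDFReal 0 1 x * g x) := by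
  rw [gauss_withDensity, integrable_withDensity_iff_integrable_smul
    ((measurable_gaussianPDFReal 0 1).real_toNNReal)]
  constructor <;> intro h <;> refine h.congr (Filter.Eventually.of_forall fun x => ?_) <;>
    simp only [NNReal.smul_def, Real.coe_toNNReal _ (gaussianPDFReal_nonneg 0 1 x), smul_eq_mul]

lemma pdf_form (x : ℝ) :
    gaussianPDFReal 0 1 x = (Real.sqrt (2 * π))⁻¹ * rexp (-(1/2) * x ^ 2) := by
  unfold gaussianPDFReal
  norm_num
  left
  ring_nf

lemma sq_expand (b c x : ℝ) (hb : b ≠ 0) :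
    c * x - b * x ^ 2 = c ^ 2 / (4 * b) + -b * (x - c / (2 * b)) ^ 2 := by
  field_simp; ring

lemma integrable_A (b c : ℝ) (hb : 0 < b) :
    Integrable (fun x : ℝ => rexp (c * x - b * x ^ 2)) := by
  have h : (fun x : ℝ => rexp (c * x - b * x ^ 2)) =
      fun x => rexp (c ^ 2 / (4 * b)) * rexp (-b * (x - c / (2 * b)) ^ 2) := by
    funext x; rw [← Real.exp_add, sq_expand b c x hb.ne']
  rw [h]
  exact ((integrable_exp_neg_mul_sq hb).comp_sub_right _).const_mul _

lemma integral_A (b c : ℝ) (hb : 0 < b) :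
    ∫ x : ℝ, rexp (c * x - b * x ^ 2) = rexp (c ^ 2 / (4 * b)) * Real.sqrt (π / b) := by
  have h : (fun x : ℝ => rexp (c * x - b * x ^ 2)) =
      fun x => rexp (c ^ 2 / (4 * b)) * rexp (-b * (x - c / (2 * b)) ^ 2) := by
    funext x; rw [← Real.exp_add, sq_expand b c x hb.ne']
  rw [h, integral_const_mul,
    integral_sub_right_eq_self (μ := volume) (fun x => rexp (-b * x ^ 2)) _, integral_gaussian]

lemma pdf_mul_exp (t s x : ℝ) :
    gaussianPDFReal 0 1 x * rexp (t * x + s * x ^ 2)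
      = (Real.sqrt (2 * π))⁻¹ * rexp (t * x - (1/2 - s) * x ^ 2) := by
  rw [pdf_form, mul_assoc, ← Real.exp_add]
  congr 2
  ring

lemma integrable_B (t s : ℝ) (hs : s < 1/2) :
    Integrable (fun x => rexp (t * x + s * x ^ 2)) (gaussianReal 0 1) := by
  rw [integrable_gaussianReal_iff]
  have h : (fun x => gaussianPDFReal 0 1 x * rexp (t * x + s * x ^ 2))
      = fun x => (Real.sqrt (2 * π))⁻¹ * rexp (t * x - (1/2 - s) * x ^ 2) := by
    funext x; exact pdf_mul_exp t s x
  rw [h]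
  exact (integrable_A (1/2 - s) t (by linarith)).const_mul _

lemma integral_B (t s : ℝ) (hs : s < 1/2) :
    ∫ x, rexp (t * x + s * x ^ 2) ∂(gaussianReal 0 1)
      = rexp (t ^ 2 / (2 * (1 - 2 * s))) / Real.sqrt (1 - 2 * s) := by
  rw [integral_gaussianReal]
  have h : (fun x => gaussianPDFReal 0 1 x * rexp (t * x + s * x ^ 2))
      = fun x => (Real.sqrt (2 * π))⁻¹ * rexp (t * x - (1/2 - s) * x ^ 2) := by
    funext x; exact pdf_mul_exp t s x
  rw [h, integral_const_mul, integral_A (1/2 - s) t (by linarith)]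
  have h2π : (0:ℝ) < 2 * π := by positivity
  have hb : (0:ℝ) < 1/2 - s := by linarith
  have h1 : t ^ 2 / (4 * (1/2 - s)) = t ^ 2 / (2 * (1 - 2 * s)) := by ring_nf
  rw [h1]
  have h2 : (Real.sqrt (2 * π))⁻¹ * Real.sqrt (π / (1/2 - s)) = (Real.sqrt (1 - 2*s))⁻¹ := by
    rw [← Real.sqrt_inv, ← Real.sqrt_mul (by positivity), ← Real.sqrt_inv]
    congr 1
    rw [eq_comm, inv_eq_iff_eq_inv, eq_comm]
    field_simp
  rw [eq_comm, div_eq_mul_inv, ← h2]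
  ring




variable {Θ : Type*} [MeasureSpace Θ]

lemma mgf_prod_gauss (hP : IsProbabilityMeasure (ℙ : Measure Θ)) {Y Z : Θ → ℝ}
    (hY : Measurable Y) (hZ : Measurable Z) (hYd : (ℙ : Measure Θ).map Y = gaussianReal 0 1)
    (hZd : (ℙ : Measure Θ).map Z = gaussianReal 0 1) (hind : IndepFun Y Z ℙ) {l : ℝ}
    (hl : |l| < 1) :
    Integrable (fun ω => rexp (l * (Y ω * Z ω))) ℙ ∧
      ∫ ω, rexp (l * (Y ω * Z ω)) ∂ℙ = (Real.sqrt (1 - l ^ 2))⁻¹ := by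
  have hl2 : l ^ 2 < 1 := by
    have := abs_nonneg l
    nlinarith [sq_abs l]
  have hs : l ^ 2 / 2 < 1 / 2 := by linarith
  have hmap : (ℙ : Measure Θ).map (fun ω => (Y ω, Z ω))
      = (gaussianReal 0 1).prod (gaussianReal 0 1) := by
    refine ((indepFun_iff_map_prod_eq_prod_map_map hY.aemeasurable hZ.aemeasurable).mp
      hind).trans ?_
    rw [hYd, hZd]
  set F : ℝ × ℝ → ℝ := fun q => rexp (l * (q.1 * q.2)) with hF
  have hFm : Measurable F := ((measurable_fst.mul measurable_snd).const_mul l).exp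
  have hslice : ∀ x : ℝ, Integrable (fun y => F (x, y)) (gaussianReal 0 1) := by
    intro x
    have : (fun y => F (x, y)) = fun y => rexp ((l * x) * y + 0 * y ^ 2) := by
      funext y; simp only [hF]; ring_nf
    rw [this]
    exact integrable_B (l * x) 0 (by norm_num)
  have hnorm : ∀ x : ℝ, (∫ y, ‖F (x, y)‖ ∂(gaussianReal 0 1))
      = rexp (0 * x + (l ^ 2 / 2) * x ^ 2) := by
    intro x
    have h1 : (fun y => ‖F (x, y)‖) = fun y => rexp ((l * x) * y + 0 * y ^ 2) := by
      funext y
      simp only [hF, Real.norm_eq_abs, abs_of_pos (Real.exp_pos _)]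
      ring_nf
    rw [h1, integral_B (l * x) 0 (by norm_num)]
    norm_num
    ring_nf
  have hFint : Integrable F ((gaussianReal 0 1).prod (gaussianReal 0 1)) := by
    refine (integrable_prod_iff hFm.aestronglyMeasurable).mpr ⟨?_, ?_⟩
    · exact Filter.Eventually.of_forall hslice
    · have : (fun x => ∫ y, ‖F (x, y)‖ ∂(gaussianReal 0 1))
          = fun x => rexp (0 * x + (l ^ 2 / 2) * x ^ 2) := funext hnorm
      rw [this]
      exact integrable_B 0 (l ^ 2 / 2) hs
  have hpair : AEMeasurable (fun ω => (Y ω, Z ω)) (ℙ : Measure Θ) :=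
    (hY.prodMk hZ).aemeasurable
  have hFm' : AEStronglyMeasurable F ((ℙ : Measure Θ).map (fun ω => (Y ω, Z ω))) := by
    rw [hmap]; exact hFm.aestronglyMeasurable
  constructor
  · have := (integrable_map_measure hFm' hpair).mp (by rwa [hmap])
    exact this
  · have h1 : ∫ ω, rexp (l * (Y ω * Z ω)) ∂ℙ
        = ∫ q, F q ∂((ℙ : Measure Θ).map (fun ω => (Y ω, Z ω))) := by
      rw [integral_map hpair hFm']
    rw [h1, hmap, integral_prod _ hFint]
    have h2 : (fun x => ∫ y, F (x, y) ∂(gaussianReal 0 1))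
        = fun x => rexp (0 * x + (l ^ 2 / 2) * x ^ 2) := by
      funext x
      rw [← hnorm x]
      congr 1
      funext y
      simp [hF, Real.norm_eq_abs, abs_of_pos (Real.exp_pos _)]
    rw [h2, integral_B 0 (l ^ 2 / 2) hs]
    norm_num
    congr 1
    ring




variable {Θ : Type*} [MeasureSpace Θ]

lemma indep_term_sum {n p : ℕ} {X : Fin n × Fin p → Θ → ℝ}
    (hmeas : ∀ k, Measurable (X k))
    (hindep : iIndepFun X ℙ)
    {ℓ m : Fin p} (g : ℝ → ℝ → ℝ) (hg : Measurable (Function.uncurry g))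
    (i : Fin n) (s : Finset (Fin n)) (his : i ∉ s) :
    IndepFun (fun ω => g (X (i, ℓ) ω) (X (i, m) ω))
      (fun ω => ∑ j ∈ s, g (X (j, ℓ) ω) (X (j, m) ω)) ℙ := by
  classical
  set S₀ : Finset (Fin n × Fin p) := {(i, ℓ), (i, m)} with hS₀
  set T₀ : Finset (Fin n × Fin p) :=
    s.image (fun j => (j, ℓ)) ∪ s.image (fun j => (j, m)) with hT₀
  have hdisj : Disjoint S₀ T₀ := by
    rw [Finset.disjoint_left]
    intro x hx hx'
    have hx1 : x.1 = i := by
      simp only [hS₀, Finset.mem_insert, Finset.mem_singleton] at hx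
      rcases hx with h | h <;> simp [h]
    have hx2 : x.1 ∈ s := by
      simp only [hT₀, Finset.mem_union, Finset.mem_image] at hx'
      rcases hx' with ⟨j, hj, rfl⟩ | ⟨j, hj, rfl⟩ <;> simpa using hj
    rw [hx1] at hx2
    exact his hx2
  have base := hindep.indepFun_finset S₀ T₀ hdisj hmeas
  have hmem1 : ((i, ℓ) : Fin n × Fin p) ∈ S₀ := by simp [hS₀]
  have hmem2 : ((i, m) : Fin n × Fin p) ∈ S₀ := by simp [hS₀]
  have hmemT1 : ∀ j : {x // x ∈ s}, ((j.1, ℓ) : Fin n × Fin p) ∈ T₀ := fun j =>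
    Finset.mem_union_left _ (Finset.mem_image_of_mem _ j.2)
  have hmemT2 : ∀ j : {x // x ∈ s}, ((j.1, m) : Fin n × Fin p) ∈ T₀ := fun j =>
    Finset.mem_union_right _ (Finset.mem_image_of_mem _ j.2)
  set φ : ({x // x ∈ S₀} → ℝ) → ℝ := fun v => g (v ⟨(i, ℓ), hmem1⟩) (v ⟨(i, m), hmem2⟩) with hφdef
  set ψ : ({x // x ∈ T₀} → ℝ) → ℝ :=
    fun v => ∑ j ∈ s.attach, g (v ⟨(j.1, ℓ), hmemT1 j⟩) (v ⟨(j.1, m), hmemT2 j⟩) with hψdef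
  have hφ : Measurable φ :=
    hg.comp (f := fun v : {x // x ∈ S₀} → ℝ => (v ⟨(i, ℓ), hmem1⟩, v ⟨(i, m), hmem2⟩))
      ((measurable_pi_apply _).prodMk (measurable_pi_apply _))
  have hψ : Measurable ψ :=
    Finset.measurable_sum _ fun j _ =>
      hg.comp (f := fun v : {x // x ∈ T₀} → ℝ => (v ⟨(j.1, ℓ), hmemT1 j⟩, v ⟨(j.1, m), hmemT2 j⟩))
        ((measurable_pi_apply _).prodMk (measurable_pi_apply _))
  have hcomp := base.comp hφ hψ
  have h1 : (φ ∘ fun a (k : {x // x ∈ S₀}) => X k a)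
      = fun ω => g (X (i, ℓ) ω) (X (i, m) ω) := rfl
  have h2 : (ψ ∘ fun a (k : {x // x ∈ T₀}) => X k a)
      = fun ω => ∑ j ∈ s, g (X (j, ℓ) ω) (X (j, m) ω) := by
    funext ω
    simp only [Function.comp_apply, hψdef]
    exact Finset.sum_attach s (fun j => g (X (j, ℓ) ω) (X (j, m) ω))
  rwa [h1, h2] at hcomp

lemma mgf_sum_of_pairwise_indep (hP : IsProbabilityMeasure (ℙ : Measure Θ)) {n : ℕ}
    (W : Fin n → Θ → ℝ)
    (hind : ∀ (i : Fin n) (s : Finset (Fin n)), i ∉ s →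
      IndepFun (W i) (fun ω => ∑ j ∈ s, W j ω) ℙ)
    (hmeas : ∀ i, Measurable (W i)) (l : ℝ)
    (hint : ∀ i, Integrable (fun ω => rexp (l * W i ω)) ℙ) (s : Finset (Fin n)) :
    Integrable (fun ω => rexp (l * ∑ j ∈ s, W j ω)) ℙ ∧
      mgf (fun ω => ∑ j ∈ s, W j ω) ℙ l = ∏ j ∈ s, mgf (W j) ℙ l := by
  classical
  induction s using Finset.induction_on with
  | empty =>
    constructor
    · simpa using (integrable_const (1 : ℝ))
    · simp [mgf]
  | insert i s his ih =>
    have hsum_eq : (fun ω => ∑ j ∈ insert i s, W j ω)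
        = W i + fun ω => ∑ j ∈ s, W j ω := by
      funext ω
      simp [Finset.sum_insert his]
    have hindep := hind i s his
    constructor
    · have h2 := hindep.integrable_exp_mul_add (hint i) ih.1
      have h3 : (fun ω => rexp (l * ∑ j ∈ insert i s, W j ω))
          = fun ω => rexp (l * ((W i + fun ω' => ∑ j ∈ s, W j ω') ω)) := by
        funext ω
        simp [Finset.sum_insert his]
      rw [h3]
      exact h2
    · rw [hsum_eq, hindep.mgf_add ((hmeas i).const_mul l).exp.aestronglyMeasurable
        (((Finset.measurable_sum s fun j _ => hmeas j).const_mul l)).exp.aestronglyMeasurable,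
        ih.2, Finset.prod_insert his]



lemma sum_sq_norm {n : ℕ} (hn : 0 < n) (a : Fin n → ℝ) :
    ∑ i : Fin n, (a i / Real.sqrt ((1 / (n:ℝ)) * ∑ j : Fin n, (a j) ^ 2)) ^ 2 ≤ (n : ℝ) := by
  have hn' : (0:ℝ) < (n:ℝ) := by exact_mod_cast hn
  set u : ℝ := (1 / (n:ℝ)) * ∑ j : Fin n, (a j) ^ 2 with hu
  have hsumnn : 0 ≤ ∑ j : Fin n, (a j) ^ 2 := Finset.sum_nonneg fun j _ => sq_nonneg _
  have hu0 : 0 ≤ u := mul_nonneg (by positivity) hsumnn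
  rcases eq_or_lt_of_le hu0 with h0 | hpos
  · have hsum : ∑ j : Fin n, (a j) ^ 2 = 0 := by
      rcases mul_eq_zero.mp h0.symm with h | h
      · exact absurd h (by positivity)
      · exact h
    have hz : ∀ j : Fin n, a j = 0 := fun j =>
      pow_eq_zero_iff (n := 2) (by norm_num) |>.mp
        ((Finset.sum_eq_zero_iff_of_nonneg (fun j _ => sq_nonneg (a j))).mp hsum j
          (Finset.mem_univ j))
    simp [hz]
    try positivity
  · have hsq : ∀ i : Fin n, (a i / Real.sqrt u) ^ 2 = (a i) ^ 2 / u := fun i => by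
      rw [div_pow, Real.sq_sqrt hu0]
    simp_rw [hsq]
    rw [← Finset.sum_div, div_le_iff₀ hpos, hu]
    rw [show (n:ℝ) * ((1 / (n:ℝ)) * ∑ j : Fin n, (a j) ^ 2) = ∑ j : Fin n, (a j) ^ 2 by
      field_simp]

lemma abs_normalized_le_one {n : ℕ} (hn : 0 < n) (a b : Fin n → ℝ) :
    |(1 / (n : ℝ)) * ∑ i : Fin n,
      (a i / Real.sqrt ((1 / (n : ℝ)) * ∑ j : Fin n, (a j) ^ 2)) *
      (b i / Real.sqrt ((1 / (n : ℝ)) * ∑ j : Fin n, (b j) ^ 2))| ≤ 1 := by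
  set f : Fin n → ℝ := fun i => a i / Real.sqrt ((1 / (n : ℝ)) * ∑ j : Fin n, (a j) ^ 2)
  set g : Fin n → ℝ := fun i => b i / Real.sqrt ((1 / (n : ℝ)) * ∑ j : Fin n, (b j) ^ 2)
  have hn' : (0:ℝ) < (n:ℝ) := by exact_mod_cast hn
  have hcs : (∑ i : Fin n, f i * g i) ^ 2 ≤ ((n : ℝ)) ^ 2 := by
    calc (∑ i : Fin n, f i * g i) ^ 2
        ≤ (∑ i : Fin n, f i ^ 2) * ∑ i : Fin n, g i ^ 2 :=
          Finset.sum_mul_sq_le_sq_mul_sq _ f g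
      _ ≤ (n : ℝ) * (n : ℝ) :=
          mul_le_mul (sum_sq_norm hn a) (sum_sq_norm hn b)
            (Finset.sum_nonneg fun j _ => sq_nonneg _) (by positivity)
      _ = ((n : ℝ)) ^ 2 := (sq (n:ℝ)).symm
  have habs : |∑ i : Fin n, f i * g i| ≤ (n : ℝ) := abs_le_of_sq_le_sq hcs hn'.le
  rw [abs_mul, abs_of_pos (by positivity : (0:ℝ) < 1 / (n:ℝ))]
  rw [div_mul_eq_mul_div, one_mul, div_le_one hn']
  exact habs

lemma coherence_pair_bound {n : ℕ} (hn : 0 < n) (a b : Fin n → ℝ) {ε : ℝ} (hε : 0 ≤ ε)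
    (ha : (n:ℝ) / 2 ≤ ∑ j : Fin n, (a j) ^ 2) (hb : (n:ℝ) / 2 ≤ ∑ j : Fin n, (b j) ^ 2)
    (hS : |∑ i : Fin n, a i * b i| ≤ ε * n) :
    |(1 / (n : ℝ)) * ∑ i : Fin n,
      (a i / Real.sqrt ((1 / (n : ℝ)) * ∑ j : Fin n, (a j) ^ 2)) *
      (b i / Real.sqrt ((1 / (n : ℝ)) * ∑ j : Fin n, (b j) ^ 2))| ≤ 2 * ε := by
  have hn' : (0:ℝ) < (n:ℝ) := by exact_mod_cast hn
  set ua : ℝ := (1 / (n:ℝ)) * ∑ j : Fin n, (a j) ^ 2 with hua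
  set ub : ℝ := (1 / (n:ℝ)) * ∑ j : Fin n, (b j) ^ 2 with hub
  have hua2 : (1:ℝ)/2 ≤ ua := by
    rw [hua, show (1:ℝ)/(n:ℝ) * ∑ j : Fin n, (a j) ^ 2 = (∑ j : Fin n, (a j) ^ 2)/(n:ℝ) by ring,
      le_div_iff₀ hn']
    linarith
  have hub2 : (1:ℝ)/2 ≤ ub := by
    rw [hub, show (1:ℝ)/(n:ℝ) * ∑ j : Fin n, (b j) ^ 2 = (∑ j : Fin n, (b j) ^ 2)/(n:ℝ) by ring,
      le_div_iff₀ hn']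
    linarith
  have hD : (1:ℝ)/2 ≤ Real.sqrt ua * Real.sqrt ub := by
    have h1 : Real.sqrt (1/2) ≤ Real.sqrt ua := Real.sqrt_le_sqrt hua2
    have h2 : Real.sqrt (1/2) ≤ Real.sqrt ub := Real.sqrt_le_sqrt hub2
    calc (1:ℝ)/2 = Real.sqrt (1/2) * Real.sqrt (1/2) :=
          (Real.mul_self_sqrt (by norm_num : (0:ℝ) ≤ 1/2)).symm
      _ ≤ Real.sqrt ua * Real.sqrt ub :=
          mul_le_mul h1 h2 (Real.sqrt_nonneg _) (Real.sqrt_nonneg _)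
  have hDpos : (0:ℝ) < Real.sqrt ua * Real.sqrt ub := lt_of_lt_of_le (by norm_num) hD
  have hsum_eq : ∑ i : Fin n, a i / Real.sqrt ua * (b i / Real.sqrt ub)
      = (∑ i : Fin n, a i * b i) / (Real.sqrt ua * Real.sqrt ub) := by
    rw [Finset.sum_div]
    congr 1
    funext i
    rw [div_mul_div_comm]
  rw [hsum_eq]
  rw [show (1:ℝ)/(n:ℝ) * ((∑ i : Fin n, a i * b i) / (Real.sqrt ua * Real.sqrt ub))
      = (∑ i : Fin n, a i * b i) / ((n:ℝ) * (Real.sqrt ua * Real.sqrt ub)) by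
    field_simp]
  rw [abs_div, abs_of_pos (by positivity : (0:ℝ) < (n:ℝ) * (Real.sqrt ua * Real.sqrt ub))]
  calc |∑ i : Fin n, a i * b i| / ((n:ℝ) * (Real.sqrt ua * Real.sqrt ub))
      ≤ (ε * n) / ((n:ℝ) * (1/2)) := by
        apply div_le_div₀ (by positivity) hS (by positivity)
        exact mul_le_mul_of_nonneg_left hD hn'.le
    _ = 2 * ε := by field_simp




lemma inv_sqrt_le_exp {x : ℝ} (hx0 : 0 ≤ x) (hx : x ≤ 1/2) :
    (Real.sqrt (1 - x))⁻¹ ≤ rexp x := by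
  have h1x : (0:ℝ) < 1 - x := by linarith
  have hs0 : 0 < Real.sqrt (1 - x) := Real.sqrt_pos.mpr h1x
  have hs : Real.sqrt (1 - x) ^ 2 = 1 - x := Real.sq_sqrt h1x.le
  have he2 : rexp (2 * x) = rexp x ^ 2 := by
    rw [two_mul, Real.exp_add, sq]
  have he : 1 + 2 * x ≤ rexp (2 * x) := by
    have := Real.add_one_le_exp (2 * x)
    linarith
  have hkey : 1 ≤ (rexp x * Real.sqrt (1 - x)) ^ 2 := by
    rw [mul_pow, ← he2, hs]
    nlinarith
  have hpos : 0 ≤ rexp x * Real.sqrt (1 - x) := by positivity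
  have : 1 ≤ rexp x * Real.sqrt (1 - x) := by nlinarith
  rw [inv_le_iff_one_le_mul₀ hs0]
  linarith [this]

lemma r_lt_one : rexp 2⁻¹ / Real.sqrt 3 < 1 := by
  rw [div_lt_one (by positivity)]
  have h1 : (rexp 2⁻¹) ^ 2 = rexp 1 := by
    rw [← Real.exp_nat_mul]
    norm_num
  have h2 : (Real.sqrt 3) ^ 2 = 3 := Real.sq_sqrt (by norm_num)
  nlinarith [Real.exp_one_lt_d9, Real.exp_pos (2⁻¹ : ℝ), Real.sqrt_nonneg 3]

lemma exists_poly_geom_bound (B : ℝ) :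
    ∃ M : ℝ, 1 ≤ M ∧ ∀ n : ℕ, (n:ℝ) ^ B * (rexp 2⁻¹ / Real.sqrt 3) ^ n ≤ M := by
  set r : ℝ := rexp 2⁻¹ / Real.sqrt 3 with hr
  have hr0 : 0 < r := by positivity
  have hrlt : r < 1 := r_lt_one
  have hb : 0 < -Real.log r := by
    have := Real.log_neg hr0 hrlt
    linarith
  have hrn : ∀ n : ℕ, r ^ n = rexp (-(-Real.log r) * n) := by
    intro n
    rw [neg_neg, mul_comm, Real.exp_nat_mul, Real.exp_log hr0]
  have htend : Filter.Tendsto (fun n : ℕ => (n:ℝ) ^ B * r ^ n) Filter.atTop (nhds 0) := by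
    have h1 := tendsto_rpow_mul_exp_neg_mul_atTop_nhds_zero B (-Real.log r) hb
    have h2 := h1.comp tendsto_natCast_atTop_atTop (α := ℕ)
    refine h2.congr fun n => ?_
    simp only [Function.comp_apply]
    rw [hrn n]
  obtain ⟨M0, hM0⟩ := htend.bddAbove_range
  refine ⟨max M0 1, le_max_right _ _, fun n => ?_⟩
  exact le_trans (hM0 ⟨n, rfl⟩) (le_max_left _ _)



lemma exp_neg_nonneg_int (hP : IsProbabilityMeasure (ℙ : Measure Θ)) {V : Θ → ℝ}
    (hV : Measurable V) (hV0 : ∀ ω, 0 ≤ V ω) :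
    Integrable (fun ω => rexp (-1 * V ω)) ℙ := by
  refine Integrable.mono' (integrable_const 1) ((hV.const_mul (-1)).exp.aestronglyMeasurable)
    (Filter.Eventually.of_forall fun ω => ?_)
  rw [Real.norm_eq_abs, abs_of_pos (Real.exp_pos _)]
  apply Real.exp_le_one_iff.mpr
  nlinarith [hV0 ω]

lemma mgf_sq_gauss (hP : IsProbabilityMeasure (ℙ : Measure Θ)) {Y : Θ → ℝ}
    (hY : Measurable Y) (hYd : (ℙ : Measure Θ).map Y = gaussianReal 0 1) :
    mgf (fun ω => (Y ω) ^ 2) ℙ (-1) = (Real.sqrt 3)⁻¹ := by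
  have hφ : Measurable fun x : ℝ => rexp (-1 * x ^ 2) :=
    (((measurable_id.pow_const 2)).const_mul (-1)).exp
  have h1 : mgf (fun ω => (Y ω) ^ 2) ℙ (-1)
      = ∫ x, rexp (-1 * x ^ 2) ∂((ℙ : Measure Θ).map Y) := by
    rw [mgf, integral_map hY.aemeasurable hφ.aestronglyMeasurable]
  rw [h1, hYd]
  have h2 : (fun x : ℝ => rexp (-1 * x ^ 2)) = fun x => rexp (0 * x + (-1) * x ^ 2) := by
    funext x; ring_nf
  rw [h2, integral_B 0 (-1) (by norm_num)]
  norm_num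

lemma tail_V (hP : IsProbabilityMeasure (ℙ : Measure Θ)) {n p : ℕ}
    {X : Fin n × Fin p → Θ → ℝ} (hmeas : ∀ k, Measurable (X k))
    (hindep : iIndepFun X ℙ)
    (hdist : ∀ k, (ℙ : Measure Θ).map (X k) = gaussianReal 0 1) (ℓ : Fin p) :
    (ℙ {ω | (∑ i : Fin n, (X (i, ℓ) ω) ^ 2) ≤ (n:ℝ)/2}).toReal
      ≤ (rexp 2⁻¹ / Real.sqrt 3) ^ n := by
  haveI := hP
  set W : Fin n → Θ → ℝ := fun i ω => (X (i, ℓ) ω) ^ 2 with hW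
  have hWmeas : ∀ i, Measurable (W i) := fun i => (hmeas (i, ℓ)).pow_const 2
  have hg : Measurable (Function.uncurry fun x _ : ℝ => x ^ 2) :=
    measurable_fst.pow_const 2
  have hWind : ∀ (i : Fin n) (s : Finset (Fin n)), i ∉ s →
      IndepFun (W i) (fun ω => ∑ j ∈ s, W j ω) ℙ := fun i s his =>
    indep_term_sum hmeas hindep (ℓ := ℓ) (m := ℓ) (fun x _ => x ^ 2) hg i s his
  have hWint : ∀ i, Integrable (fun ω => rexp (-1 * W i ω)) ℙ := fun i =>
    exp_neg_nonneg_int hP (hWmeas i) (fun ω => sq_nonneg _)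
  obtain ⟨hint, hmgf⟩ := mgf_sum_of_pairwise_indep hP W hWind hWmeas (-1) hWint Finset.univ
  have hmgf_each : ∀ i : Fin n, mgf (W i) ℙ (-1) = (Real.sqrt 3)⁻¹ := fun i =>
    mgf_sq_gauss hP (hmeas (i, ℓ)) (hdist (i, ℓ))
  have hch := measure_le_le_exp_mul_mgf (μ := (ℙ : Measure Θ))
    (X := fun ω => ∑ j : Fin n, W j ω) (t := -1) ((n:ℝ)/2) (by norm_num) hint
  calc (ℙ {ω | (∑ i : Fin n, (X (i, ℓ) ω) ^ 2) ≤ (n:ℝ)/2}).toReal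
      ≤ rexp (-(-1) * ((n:ℝ)/2)) * mgf (fun ω => ∑ j : Fin n, W j ω) ℙ (-1) := hch
    _ = (rexp 2⁻¹ / Real.sqrt 3) ^ n := by
        rw [hmgf]
        rw [Finset.prod_congr rfl (fun i _ => hmgf_each i), Finset.prod_const]
        simp only [Finset.card_univ, Fintype.card_fin]
        rw [show -(-1 : ℝ) * ((n:ℝ)/2) = (n : ℕ) * (2⁻¹ : ℝ) by push_cast; ring,
          Real.exp_nat_mul, ← mul_pow, div_eq_mul_inv]

lemma tail_S (hP : IsProbabilityMeasure (ℙ : Measure Θ)) {n p : ℕ}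
    {X : Fin n × Fin p → Θ → ℝ} (hmeas : ∀ k, Measurable (X k))
    (hindep : iIndepFun X ℙ)
    (hdist : ∀ k, (ℙ : Measure Θ).map (X k) = gaussianReal 0 1) {ℓ m : Fin p} (hlm : ℓ ≠ m)
    {l : ℝ} (hl0 : 0 ≤ l) (hl : l < 1) (ε : ℝ) :
    (ℙ {ω | ε ≤ ∑ i : Fin n, X (i, ℓ) ω * X (i, m) ω}).toReal
        ≤ rexp (-l * ε) * ((Real.sqrt (1 - l ^ 2))⁻¹) ^ n ∧
    (ℙ {ω | ∑ i : Fin n, X (i, ℓ) ω * X (i, m) ω ≤ -ε}).toReal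
        ≤ rexp (-l * ε) * ((Real.sqrt (1 - l ^ 2))⁻¹) ^ n := by
  haveI := hP
  set W : Fin n → Θ → ℝ := fun i ω => X (i, ℓ) ω * X (i, m) ω with hW
  have hWmeas : ∀ i, Measurable (W i) := fun i => (hmeas (i, ℓ)).mul (hmeas (i, m))
  have hg : Measurable (Function.uncurry fun x y : ℝ => x * y) :=
    measurable_fst.mul measurable_snd
  have hWind : ∀ (i : Fin n) (s : Finset (Fin n)), i ∉ s →
      IndepFun (W i) (fun ω => ∑ j ∈ s, W j ω) ℙ := fun i s his =>
    indep_term_sum hmeas hindep (ℓ := ℓ) (m := m) (fun x y => x * y) hg i s his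
  have hpair : ∀ (i : Fin n) (l' : ℝ), |l'| < 1 →
      Integrable (fun ω => rexp (l' * W i ω)) ℙ ∧
        mgf (W i) ℙ l' = (Real.sqrt (1 - l' ^ 2))⁻¹ := by
    intro i l' hl'
    have h := mgf_prod_gauss hP (hmeas (i, ℓ)) (hmeas (i, m)) (hdist (i, ℓ)) (hdist (i, m))
      (hindep.indepFun (by simp [hlm])) hl'
    exact ⟨h.1, h.2⟩
  have habs : |l| < 1 := by rwa [abs_of_nonneg hl0]
  have habs' : |(-l)| < 1 := by rwa [abs_neg, abs_of_nonneg hl0]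
  constructor
  · obtain ⟨hint, hmgf⟩ := mgf_sum_of_pairwise_indep hP W hWind hWmeas l
      (fun i => (hpair i l habs).1) Finset.univ
    have hch := measure_ge_le_exp_mul_mgf (μ := (ℙ : Measure Θ))
      (X := fun ω => ∑ j : Fin n, W j ω) (t := l) ε hl0 hint
    refine le_trans hch ?_
    rw [hmgf, Finset.prod_congr rfl (fun i _ => (hpair i l habs).2), Finset.prod_const]
    simp only [Finset.card_univ, Fintype.card_fin]
    exact le_refl _
  · obtain ⟨hint, hmgf⟩ := mgf_sum_of_pairwise_indep hP W hWind hWmeas (-l)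
      (fun i => (hpair i (-l) habs').1) Finset.univ
    have hch := measure_le_le_exp_mul_mgf (μ := (ℙ : Measure Θ))
      (X := fun ω => ∑ j : Fin n, W j ω) (t := -l) (-ε) (by linarith) hint
    refine le_trans hch ?_
    rw [hmgf, Finset.prod_congr rfl (fun i _ => (hpair i (-l) habs').2), Finset.prod_const]
    simp only [Finset.card_univ, Fintype.card_fin, neg_sq]
    rw [show -(-l) * -ε = -l * ε by ring]

end Coh


open scoped ENNReal NNReal

/-- Coherence bound for an i.i.d. standard Gaussian design: with probability at
least `1 − C/p`, the empirical coherence of the normalized columns is at most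
`C'·√(log p / n)`. -/
theorem stmt_14 {Θ : Type*} [MeasureSpace Θ] (hP : IsProbabilityMeasure (ℙ : Measure Θ))
    (A : ℝ) (hA : 0 < A) :
    ∃ C C' : ℝ, 0 < C ∧ 0 < C' ∧
      ∀ (n p : ℕ), 0 < n → 1 < p → (p : ℝ) ≤ (n : ℝ) ^ A →
      ∀ (X : Fin n × Fin p → Θ → ℝ), (∀ i, Measurable (X i)) →
        iIndepFun X ℙ →
        (∀ i, (ℙ : Measure Θ).map (X i) = gaussianReal 0 1) →
        ENNReal.ofReal (1 - C / p) ≤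
          ℙ {ω | ∀ ℓ m : Fin p, ℓ ≠ m →
            |(1 / (n : ℝ)) * ∑ i : Fin n,
              (X (i, ℓ) ω / Real.sqrt ((1 / (n : ℝ)) * ∑ j : Fin n, (X (j, ℓ) ω) ^ 2)) *
              (X (i, m) ω / Real.sqrt ((1 / (n : ℝ)) * ∑ j : Fin n, (X (j, m) ω) ^ 2))| ≤
            C' * Real.sqrt (Real.log p / n)} := by
  classical
  obtain ⟨M, hM1, hM⟩ := Coh.exists_poly_geom_bound (2 * A)
  refine ⟨M + 2, 8, by linarith, by norm_num, ?_⟩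
  intro n p hn hp hpA X hmeas hindep hdist
  haveI := hP
  have hp1 : (1:ℝ) < (p:ℝ) := by exact_mod_cast hp
  have hp0 : (0:ℝ) < (p:ℝ) := by linarith
  have hn' : (0:ℝ) < (n:ℝ) := by exact_mod_cast hn
  have hCp : 0 ≤ (M + 2) / (p:ℝ) := by positivity
  set q : ℝ := Real.sqrt (Real.log p / n) with hq
  have hq0 : 0 ≤ q := Real.sqrt_nonneg _
  by_cases hbig : 1 ≤ 8 * q
  · have hall : {ω : Θ | ∀ ℓ m : Fin p, ℓ ≠ m →
        |(1 / (n : ℝ)) * ∑ i : Fin n,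
          (X (i, ℓ) ω / Real.sqrt ((1 / (n : ℝ)) * ∑ j : Fin n, (X (j, ℓ) ω) ^ 2)) *
          (X (i, m) ω / Real.sqrt ((1 / (n : ℝ)) * ∑ j : Fin n, (X (j, m) ω) ^ 2))| ≤
        8 * Real.sqrt (Real.log p / n)} = Set.univ := by
      rw [Set.eq_univ_iff_forall]
      intro ω ℓ m _
      exact le_trans (Coh.abs_normalized_le_one hn (fun i => X (i, ℓ) ω)
        (fun i => X (i, m) ω)) hbig
    rw [hall, measure_univ]
    exact ENNReal.ofReal_le_one.mpr (by linarith)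
  · push_neg at hbig
    set l : ℝ := 2 * q with hl
    have hl0 : 0 ≤ l := by positivity
    have hl1 : l < 1 := by
      have : 2 * q ≤ 8 * q := by linarith
      linarith
    have hx12 : l ^ 2 ≤ 1 / 2 := by nlinarith
    set r : ℝ := Real.exp 2⁻¹ / Real.sqrt 3 with hr
    have hr0 : 0 < r := by positivity
    -- bad events
    set Sf : Fin p → Fin p → Θ → ℝ := fun ℓ m ω => ∑ i : Fin n, X (i, ℓ) ω * X (i, m) ω
      with hSf
    set Vf : Fin p → Θ → ℝ := fun ℓ ω => ∑ i : Fin n, (X (i, ℓ) ω) ^ 2 with hVf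
    have hSmeas : ∀ ℓ m, Measurable (Sf ℓ m) := fun ℓ m =>
      Finset.measurable_sum _ fun i _ => (hmeas (i, ℓ)).mul (hmeas (i, m))
    have hVmeas : ∀ ℓ, Measurable (Vf ℓ) := fun ℓ =>
      Finset.measurable_sum _ fun i _ => (hmeas (i, ℓ)).pow_const 2
    set Bv : Fin p → Set Θ := fun ℓ => {ω | Vf ℓ ω ≤ (n:ℝ)/2} with hBv
    set Bu : Fin p → Fin p → Set Θ := fun ℓ m =>
      if ℓ = m then ∅ else {ω | 4 * q * (n:ℝ) ≤ Sf ℓ m ω} with hBu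
    set Bl : Fin p → Fin p → Set Θ := fun ℓ m =>
      if ℓ = m then ∅ else {ω | Sf ℓ m ω ≤ -(4 * q * (n:ℝ))} with hBl
    set B : Set Θ := (⋃ ℓ, Bv ℓ) ∪ ((⋃ ℓ, ⋃ m, Bu ℓ m) ∪ (⋃ ℓ, ⋃ m, Bl ℓ m)) with hB
    have hBvmeas : ∀ ℓ, MeasurableSet (Bv ℓ) := fun ℓ =>
      measurableSet_le (hVmeas ℓ) measurable_const
    have hBumeas : ∀ ℓ m, MeasurableSet (Bu ℓ m) := fun ℓ m => by
      rw [hBu]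
      by_cases h : ℓ = m
      · simp [h]
      · simp only [h, if_false]
        exact measurableSet_le measurable_const (hSmeas ℓ m)
    have hBlmeas : ∀ ℓ m, MeasurableSet (Bl ℓ m) := fun ℓ m => by
      rw [hBl]
      by_cases h : ℓ = m
      · simp [h]
      · simp only [h, if_false]
        exact measurableSet_le (hSmeas ℓ m) measurable_const
    have hBmeas : MeasurableSet B :=
      (MeasurableSet.iUnion hBvmeas).union
        (((MeasurableSet.iUnion fun ℓ => MeasurableSet.iUnion fun m => hBumeas ℓ m)).union
          ((MeasurableSet.iUnion fun ℓ => MeasurableSet.iUnion fun m => hBlmeas ℓ m)))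
    -- complement of B is contained in the good event
    have hsub : Bᶜ ⊆ {ω : Θ | ∀ ℓ m : Fin p, ℓ ≠ m →
        |(1 / (n : ℝ)) * ∑ i : Fin n,
          (X (i, ℓ) ω / Real.sqrt ((1 / (n : ℝ)) * ∑ j : Fin n, (X (j, ℓ) ω) ^ 2)) *
          (X (i, m) ω / Real.sqrt ((1 / (n : ℝ)) * ∑ j : Fin n, (X (j, m) ω) ^ 2))| ≤
        8 * Real.sqrt (Real.log p / n)} := by
      intro ω hω
      simp only [hB, Set.mem_compl_iff, Set.mem_union, Set.mem_iUnion, not_or, not_exists] at hω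
      obtain ⟨hωv, hωu, hωl⟩ := hω
      intro ℓ m hlm
      have hVa : (n:ℝ)/2 ≤ Vf ℓ ω := le_of_not_ge (hωv ℓ)
      have hVb : (n:ℝ)/2 ≤ Vf m ω := le_of_not_ge (hωv m)
      have hu : ¬ (4 * q * (n:ℝ) ≤ Sf ℓ m ω) := by
        have h' := hωu ℓ m
        simp only [hBu, if_neg hlm, Set.mem_setOf_eq] at h'
        exact h'
      have hlo : ¬ (Sf ℓ m ω ≤ -(4 * q * (n:ℝ))) := by
        have h' := hωl ℓ m
        simp only [hBl, if_neg hlm, Set.mem_setOf_eq] at h'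
        exact h'
      have hS : |∑ i : Fin n, X (i, ℓ) ω * X (i, m) ω| ≤ (4 * q) * (n:ℝ) := by
        rw [abs_le]
        constructor
        · have := lt_of_not_ge hlo
          simp only [hSf] at this ⊢
          linarith
        · have := lt_of_not_ge hu
          simp only [hSf] at this ⊢
          linarith
      have hbound := Coh.coherence_pair_bound hn (fun i => X (i, ℓ) ω) (fun i => X (i, m) ω)
        (by positivity : (0:ℝ) ≤ 4 * q) hVa hVb hS
      calc |(1 / (n : ℝ)) * ∑ i : Fin n,
          (X (i, ℓ) ω / Real.sqrt ((1 / (n : ℝ)) * ∑ j : Fin n, (X (j, ℓ) ω) ^ 2)) *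
          (X (i, m) ω / Real.sqrt ((1 / (n : ℝ)) * ∑ j : Fin n, (X (j, m) ω) ^ 2))|
          ≤ 2 * (4 * q) := hbound
        _ = 8 * q := by ring
    -- tail bound for each Bv
    have hBvbound : ∀ ℓ, ℙ (Bv ℓ) ≤ ENNReal.ofReal (r ^ n) := by
      intro ℓ
      rw [← ENNReal.ofReal_toReal (measure_ne_top ℙ (Bv ℓ))]
      exact ENNReal.ofReal_le_ofReal (Coh.tail_V hP hmeas hindep hdist ℓ)
    have hq2 : q ^ 2 = Real.log p / n := by
      rw [hq]
      exact Real.sq_sqrt (div_nonneg (Real.log_nonneg hp1.le) hn'.le)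
    have hq2n : q ^ 2 * (n:ℝ) = Real.log p := by
      rw [hq2, div_mul_cancel₀ _ hn'.ne']
    have hpair_bound : Real.exp (-l * (4 * q * (n:ℝ))) * ((Real.sqrt (1 - l ^ 2))⁻¹) ^ n
        ≤ (((p:ℝ)) ^ 4)⁻¹ := by
      have h1 : (Real.sqrt (1 - l ^ 2))⁻¹ ≤ Real.exp (l ^ 2) :=
        Coh.inv_sqrt_le_exp (sq_nonneg l) hx12
      have h2 : ((Real.sqrt (1 - l ^ 2))⁻¹) ^ n ≤ (Real.exp (l ^ 2)) ^ n :=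
        pow_le_pow_left₀ (by positivity) h1 n
      calc Real.exp (-l * (4 * q * (n:ℝ))) * ((Real.sqrt (1 - l ^ 2))⁻¹) ^ n
          ≤ Real.exp (-l * (4 * q * (n:ℝ))) * (Real.exp (l ^ 2)) ^ n :=
            mul_le_mul_of_nonneg_left h2 (Real.exp_pos _).le
        _ = Real.exp (-l * (4 * q * (n:ℝ)) + (n:ℕ) * l ^ 2) := by
            rw [Real.exp_add, Real.exp_nat_mul]
        _ = Real.exp (-(4 * Real.log p)) := by
            congr 1
            have harith : -l * (4 * q * (n:ℝ)) + (n:ℝ) * l ^ 2 = -(4 * (q ^ 2 * (n:ℝ))) := by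
              rw [hl]; ring
            rw [harith, hq2n]
        _ = (((p:ℝ)) ^ 4)⁻¹ := by
            rw [show -(4 * Real.log p) = (4:ℕ) * (-Real.log p) by push_cast; ring,
              Real.exp_nat_mul, Real.exp_neg, Real.exp_log hp0, inv_pow]
    have hBubound : ∀ ℓ m, ℙ (Bu ℓ m) ≤ ENNReal.ofReal ((((p:ℝ)) ^ 4)⁻¹) := by
      intro ℓ m
      by_cases h : ℓ = m
      · simp only [hBu, if_pos h]
        simp
      · simp only [hBu, if_neg h]
        rw [← ENNReal.ofReal_toReal (measure_ne_top ℙ _)]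
        apply ENNReal.ofReal_le_ofReal
        exact le_trans (Coh.tail_S hP hmeas hindep hdist h hl0 hl1 (4 * q * (n:ℝ))).1
          hpair_bound
    have hBlbound : ∀ ℓ m, ℙ (Bl ℓ m) ≤ ENNReal.ofReal ((((p:ℝ)) ^ 4)⁻¹) := by
      intro ℓ m
      by_cases h : ℓ = m
      · simp only [hBl, if_pos h]
        simp
      · simp only [hBl, if_neg h]
        rw [← ENNReal.ofReal_toReal (measure_ne_top ℙ _)]
        apply ENNReal.ofReal_le_ofReal
        exact le_trans (Coh.tail_S hP hmeas hindep hdist h hl0 hl1 (4 * q * (n:ℝ))).2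
          hpair_bound
    -- union bounds
    have hU1 : ℙ (⋃ ℓ, Bv ℓ) ≤ (p : ℝ≥0∞) * ENNReal.ofReal (r ^ n) := by
      refine le_trans (measure_iUnion_le _) ?_
      rw [tsum_fintype]
      refine le_trans (Finset.sum_le_sum fun ℓ _ => hBvbound ℓ) ?_
      rw [Finset.sum_const, Finset.card_univ, Fintype.card_fin, nsmul_eq_mul]
    have hU2 : ℙ (⋃ ℓ, ⋃ m, Bu ℓ m) ≤ (p : ℝ≥0∞) * ((p : ℝ≥0∞) *
        ENNReal.ofReal ((((p:ℝ)) ^ 4)⁻¹)) := by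
      refine le_trans (measure_iUnion_le _) ?_
      rw [tsum_fintype]
      have hinner : ∀ ℓ, ℙ (⋃ m, Bu ℓ m)
          ≤ (p : ℝ≥0∞) * ENNReal.ofReal ((((p:ℝ)) ^ 4)⁻¹) := by
        intro ℓ
        refine le_trans (measure_iUnion_le _) ?_
        rw [tsum_fintype]
        refine le_trans (Finset.sum_le_sum fun m _ => hBubound ℓ m) ?_
        rw [Finset.sum_const, Finset.card_univ, Fintype.card_fin, nsmul_eq_mul]
      refine le_trans (Finset.sum_le_sum fun ℓ _ => hinner ℓ) ?_
      rw [Finset.sum_const, Finset.card_univ, Fintype.card_fin, nsmul_eq_mul]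
    have hU3 : ℙ (⋃ ℓ, ⋃ m, Bl ℓ m) ≤ (p : ℝ≥0∞) * ((p : ℝ≥0∞) *
        ENNReal.ofReal ((((p:ℝ)) ^ 4)⁻¹)) := by
      refine le_trans (measure_iUnion_le _) ?_
      rw [tsum_fintype]
      have hinner : ∀ ℓ, ℙ (⋃ m, Bl ℓ m)
          ≤ (p : ℝ≥0∞) * ENNReal.ofReal ((((p:ℝ)) ^ 4)⁻¹) := by
        intro ℓ
        refine le_trans (measure_iUnion_le _) ?_
        rw [tsum_fintype]
        refine le_trans (Finset.sum_le_sum fun m _ => hBlbound ℓ m) ?_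
        rw [Finset.sum_const, Finset.card_univ, Fintype.card_fin, nsmul_eq_mul]
      refine le_trans (Finset.sum_le_sum fun ℓ _ => hinner ℓ) ?_
      rw [Finset.sum_const, Finset.card_univ, Fintype.card_fin, nsmul_eq_mul]
    -- real arithmetic
    have hrn0 : 0 ≤ r ^ n := (pow_pos hr0 n).le
    have hA2 : (p:ℝ) ^ 2 * r ^ n ≤ M := by
      have hpow : (p:ℝ) ^ 2 ≤ ((n:ℝ) ^ A) ^ 2 := by
        apply pow_le_pow_left₀ hp0.le hpA
      have hrpow : ((n:ℝ) ^ A) ^ 2 = (n:ℝ) ^ (2 * A) := by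
        rw [← Real.rpow_natCast ((n:ℝ) ^ A) 2, ← Real.rpow_mul (Nat.cast_nonneg n)]
        norm_num
        rw [mul_comm]
      calc (p:ℝ) ^ 2 * r ^ n ≤ ((n:ℝ) ^ A) ^ 2 * r ^ n :=
            mul_le_mul_of_nonneg_right hpow hrn0
        _ = (n:ℝ) ^ (2 * A) * r ^ n := by rw [hrpow]
        _ ≤ M := hM n
    have hfirst : (p:ℝ) * r ^ n ≤ M / p := by
      rw [le_div_iff₀ hp0]
      calc (p:ℝ) * r ^ n * p = (p:ℝ) ^ 2 * r ^ n := by ring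
        _ ≤ M := hA2
    have hsecond : (p:ℝ) * ((p:ℝ) * (((p:ℝ)) ^ 4)⁻¹) ≤ 1 / p := by
      have heq : (p:ℝ) * ((p:ℝ) * (((p:ℝ)) ^ 4)⁻¹) = ((p:ℝ) ^ 2)⁻¹ := by
        field_simp
      rw [heq, div_eq_mul_inv, one_mul]
      apply inv_anti₀ hp0
      nlinarith
    have hreal : (p:ℝ) * r ^ n + ((p:ℝ) * ((p:ℝ) * (((p:ℝ)) ^ 4)⁻¹)
        + (p:ℝ) * ((p:ℝ) * (((p:ℝ)) ^ 4)⁻¹)) ≤ (M + 2) / p := by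
      rw [show (M + 2) / (p:ℝ) = M / p + (1/p + 1/p) by ring]
      exact add_le_add hfirst (add_le_add hsecond hsecond)
    -- total bad probability
    have hofp : (p : ℝ≥0∞) = ENNReal.ofReal (p:ℝ) := (ENNReal.ofReal_natCast p).symm
    have hBtotal : ℙ B ≤ ENNReal.ofReal ((M + 2) / p) := by
      calc ℙ B ≤ ℙ (⋃ ℓ, Bv ℓ) + (ℙ (⋃ ℓ, ⋃ m, Bu ℓ m) + ℙ (⋃ ℓ, ⋃ m, Bl ℓ m)) := by
            refine le_trans (measure_union_le _ _) ?_
            exact add_le_add le_rfl (measure_union_le _ _)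
        _ ≤ (p : ℝ≥0∞) * ENNReal.ofReal (r ^ n)
            + ((p : ℝ≥0∞) * ((p : ℝ≥0∞) * ENNReal.ofReal ((((p:ℝ)) ^ 4)⁻¹))
              + (p : ℝ≥0∞) * ((p : ℝ≥0∞) * ENNReal.ofReal ((((p:ℝ)) ^ 4)⁻¹))) :=
            add_le_add hU1 (add_le_add hU2 hU3)
        _ = ENNReal.ofReal ((p:ℝ) * r ^ n + ((p:ℝ) * ((p:ℝ) * (((p:ℝ)) ^ 4)⁻¹)
              + (p:ℝ) * ((p:ℝ) * (((p:ℝ)) ^ 4)⁻¹))) := by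
            rw [hofp, ← ENNReal.ofReal_mul hp0.le, ← ENNReal.ofReal_mul hp0.le,
              ← ENNReal.ofReal_mul hp0.le, ← ENNReal.ofReal_add (by positivity) (by positivity),
              ← ENNReal.ofReal_add (by positivity) (by positivity)]
        _ ≤ ENNReal.ofReal ((M + 2) / p) := ENNReal.ofReal_le_ofReal hreal
    calc ENNReal.ofReal (1 - (M + 2) / p)
        = 1 - ENNReal.ofReal ((M + 2) / p) := by
          rw [ENNReal.ofReal_sub _ hCp, ENNReal.ofReal_one]
      _ ≤ 1 - ℙ B := tsub_le_tsub_left hBtotal 1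
      _ = ℙ Bᶜ := by rw [measure_compl hBmeas (measure_ne_top _ _), measure_univ]
      _ ≤ _ := measure_mono hsub
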